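/- Let A be a genotype matrix and B a haplotype matrix explaining A that satisfies the three gamete property. Let g ∈ A_i be a row of A (so g[i] = 2), let {k,l} be an edge of the resolution graph G_i of weight w ∈ {0,1} with g[k] = g[l] = 2, and let h, h' be the two rows of B explaining g. Then h[i] = h[k] holds if, and only if, (h[i] = h[l] holds exactly when w = 0); i.e., the resolution of g relative to column i is the same in k and l when w = 0 and opposite when w = 1. -/
import Mathlib


/-- A pair of haplotypes `h`, `h'` explains a genotype `g`:
entries `0`/`1` are copied, and at `2`-entries the haplotypes differ. -/
def ExplainsRow {m : ℕ} (h h' : Fin m → Bool) (g : Fin m → Fin 3) : Prop :=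
  ∀ j : Fin m,
    (g j = 0 → h j = false ∧ h' j = false) ∧
    (g j = 1 → h j = true ∧ h' j = true) ∧
    (g j = 2 → h j ≠ h' j)

/-- A `2n × m` haplotype matrix, given by its odd rows `B₁` and even rows `B₂`,
explains an `n × m` genotype matrix `A`. -/
def Explains {n m : ℕ} (B₁ B₂ : Fin n → Fin m → Bool) (A : Fin n → Fin m → Fin 3) : Prop :=
  ∀ r : Fin n, ExplainsRow (B₁ r) (B₂ r) (A r)

/-- The induced set `ind^B(i,j)` of a haplotype matrix: all pairs `xy` appearing
in columns `i` and `j` in some row of `B`. -/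
def indB {n m : ℕ} (B₁ B₂ : Fin n → Fin m → Bool) (i j : Fin m) : Set (Bool × Bool) :=
  {p | ∃ r : Fin n, (B₁ r i = p.1 ∧ B₁ r j = p.2) ∨ (B₂ r i = p.1 ∧ B₂ r j = p.2)}

/-- The three gamete property: `{01,10,11}` is never a subset of an induced set. -/
def ThreeGamete {n m : ℕ} (B₁ B₂ : Fin n → Fin m → Bool) : Prop :=
  ∀ i j : Fin m,
    ¬ (({(false, true), (true, false), (true, true)} : Set (Bool × Bool)) ⊆ indB B₁ B₂ i j)

/-- The four gamete property: no induced set equals `{00,01,10,11}`. -/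
def FourGamete {n m : ℕ} (B₁ B₂ : Fin n → Fin m → Bool) : Prop :=
  ∀ i j : Fin m,
    indB B₁ B₂ i j ≠
      ({(false, false), (false, true), (true, false), (true, true)} : Set (Bool × Bool))

/-- A genotype matrix admits a directed perfect phylogeny if some explaining
haplotype matrix satisfies the three gamete property. -/
def AdmitsDirectedPP {n m : ℕ} (A : Fin n → Fin m → Fin 3) : Prop :=
  ∃ B₁ B₂ : Fin n → Fin m → Bool, Explains B₁ B₂ A ∧ ThreeGamete B₁ B₂

/-- A genotype matrix admits a perfect phylogeny if some explaining
haplotype matrix satisfies the four gamete property. -/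
def AdmitsPP {n m : ℕ} (A : Fin n → Fin m → Fin 3) : Prop :=
  ∃ B₁ B₂ : Fin n → Fin m → Bool, Explains B₁ B₂ A ∧ FourGamete B₁ B₂

/-- Encode a haplotype entry as a genotype entry. -/
def boolToFin3 (b : Bool) : Fin 3 := if b then 1 else 0

/-- The induced set `ind^A(i,j)` of a genotype matrix. -/
def indA {n m : ℕ} (A : Fin n → Fin m → Fin 3) (i j : Fin m) : Set (Bool × Bool) :=
  {p | ∃ r : Fin n,
    (A r i = boolToFin3 p.1 ∧ A r j = boolToFin3 p.2) ∨
    (A r i = boolToFin3 p.1 ∧ A r j = 2) ∨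
    (A r i = 2 ∧ A r j = boolToFin3 p.2)}

/-- Column `i` of `A` is greater than column `j` (written `i ≻^A j`):
`ind^A(i,j) ⊆ {00,10,11}` and the two columns are not identical. -/
def ColGreater {n m : ℕ} (A : Fin n → Fin m → Fin 3) (i j : Fin m) : Prop :=
  indA A i j ⊆ ({(false, false), (true, false), (true, true)} : Set (Bool × Bool)) ∧
  ∃ r : Fin n, A r i ≠ A r j

/-- The set `A_i`: rows `g` of `A` with `g[i] = 2` such that `i` is `≻^A`-maximal
among the `2`-columns of `g` and has the least index among all such maximal columns. -/
def rowSet {n m : ℕ} (A : Fin n → Fin m → Fin 3) (i : Fin m) : Set (Fin n) :=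
  {r | A r i = 2 ∧
    (∀ j : Fin m, j ≠ i → A r j = 2 → ¬ ColGreater A j i) ∧
    (∀ j : Fin m, j ≠ i →
      (A r j = 2 ∧ ∀ k : Fin m, k ≠ j → A r k = 2 → ¬ ColGreater A k j) → i < j)}

/-- `k` is a vertex of the resolution graph `G_i`. -/
def resVert {n m : ℕ} (A : Fin n → Fin m → Fin 3) (i k : Fin m) : Prop :=
  ∃ r ∈ rowSet A i, A r k = 2

/-- The weighted edges of the resolution graph `G_i`: an edge `{k,l}` of weight `0`
or weight `1`, as prescribed by the construction of resolution graphs. -/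
def resEdge {n m : ℕ} (A : Fin n → Fin m → Fin 3) (i : Fin m) (k l : Fin m) (w : ℕ) : Prop :=
  k ≠ l ∧ (∃ r ∈ rowSet A i, A r k = 2 ∧ A r l = 2) ∧
  ((w = 0 ∧
      (((true, true) : Bool × Bool) ∈ indA A k l ∨
        ∃ j : Fin m, j ≠ i ∧ ∃ r₂ ∈ rowSet A j, A r₂ k = 2 ∧ A r₂ l = 2)) ∨
   (w = 1 ∧ ({(false, true), (true, false)} : Set (Bool × Bool)) ⊆ indA A k l))

section Helpers

variable {n m : ℕ} {A : Fin n → Fin m → Fin 3} {B₁ B₂ : Fin n → Fin m → Bool}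

lemma fin3_cases (x : Fin 3) : x = 0 ∨ x = 1 ∨ x = 2 := by omega

lemma expl_two (hexp : Explains B₁ B₂ A) {s : Fin n} {p : Fin m} (h : A s p = 2) :
    B₁ s p ≠ B₂ s p := (hexp s p).2.2 h

lemma expl_two' (hexp : Explains B₁ B₂ A) {s : Fin n} {p : Fin m}
    (h : B₁ s p ≠ B₂ s p) : A s p = 2 := by
  rcases fin3_cases (A s p) with h0 | h1 | h2
  · rcases (hexp s p).1 h0 with ⟨a, b⟩; rw [a, b] at h; exact absurd rfl h
  · rcases (hexp s p).2.1 h1 with ⟨a, b⟩; rw [a, b] at h; exact absurd rfl h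
  · exact h2

lemma expl_bool (hexp : Explains B₁ B₂ A) {s : Fin n} {p : Fin m} {x : Bool}
    (h : A s p = boolToFin3 x) : B₁ s p = x ∧ B₂ s p = x := by
  cases x
  · simp only [boolToFin3, if_neg] at h
    exact (hexp s p).1 (by simpa using h)
  · exact (hexp s p).2.1 (by simpa [boolToFin3] using h)

lemma noThree (h3 : ThreeGamete B₁ B₂) (p q : Fin m)
    (h1 : ((false, true) : Bool × Bool) ∈ indB B₁ B₂ p q)
    (h2 : ((true, false) : Bool × Bool) ∈ indB B₁ B₂ p q)
    (h3' : ((true, true) : Bool × Bool) ∈ indB B₁ B₂ p q) : False := by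
  refine h3 p q (fun x hx => ?_)
  simp only [Set.mem_insert_iff, Set.mem_singleton_iff] at hx
  rcases hx with rfl | rfl | rfl <;> assumption

lemma indA_subset_indB (hexp : Explains B₁ B₂ A) (p q : Fin m) :
    indA A p q ⊆ indB B₁ B₂ p q := by
  rintro ⟨x, y⟩ ⟨s, h | h | h⟩
  · exact ⟨s, Or.inl ⟨(expl_bool hexp h.1).1, (expl_bool hexp h.2).1⟩⟩
  · have hp := expl_bool hexp h.1
    have hq := expl_two hexp h.2
    by_cases hy : B₁ s q = y
    · exact ⟨s, Or.inl ⟨hp.1, hy⟩⟩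
    · have : B₂ s q = y := by
        cases hb : B₁ s q <;> cases hc : B₂ s q <;> cases y <;> simp_all
      exact ⟨s, Or.inr ⟨hp.2, this⟩⟩
  · have hq := expl_bool hexp h.2
    have hp := expl_two hexp h.1
    by_cases hx : B₁ s p = x
    · exact ⟨s, Or.inl ⟨hx, hq.1⟩⟩
    · have : B₂ s p = x := by
        cases hb : B₁ s p <;> cases hc : B₂ s p <;> cases x <;> simp_all
      exact ⟨s, Or.inr ⟨this, hq.2⟩⟩

lemma colGreater_irrefl (A : Fin n → Fin m → Fin 3) (p : Fin m) : ¬ ColGreater A p p :=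
  fun h => by rcases h.2 with ⟨s, hs⟩; exact hs rfl

lemma no01_of_subset {p q : Fin m}
    (h : indA A p q ⊆ ({(false, false), (true, false), (true, true)} : Set (Bool × Bool))) :
    ((false, true) : Bool × Bool) ∉ indA A p q := fun hm => by
  have := h hm; simp at this

/-- the pair of haplotypes at a 2-2 row, resolved crosswise, puts 01 and 10 into indB -/
lemma cross_mem (hexp : Explains B₁ B₂ A) {s : Fin n} {p q : Fin m}
    (hp : A s p = 2) (hq : A s q = 2) (hne : B₁ s p ≠ B₁ s q) :
    ((false, true) : Bool × Bool) ∈ indB B₁ B₂ p q ∧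
      ((true, false) : Bool × Bool) ∈ indB B₁ B₂ p q := by
  have h1 := expl_two hexp hp
  have h2 := expl_two hexp hq
  cases ha : B₁ s p <;> cases hb : B₁ s q <;>
    cases hc : B₂ s p <;> cases hd : B₂ s q <;> simp_all
  · exact ⟨⟨s, Or.inl ⟨ha, hb⟩⟩, ⟨s, Or.inr ⟨hc, hd⟩⟩⟩
  · exact ⟨⟨s, Or.inr ⟨hc, hd⟩⟩, ⟨s, Or.inl ⟨ha, hb⟩⟩⟩

lemma diag_mem (hexp : Explains B₁ B₂ A) {s : Fin n} {p q : Fin m}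
    (hp : A s p = 2) (hq : A s q = 2) (heq : B₁ s p = B₁ s q) :
    ((true, true) : Bool × Bool) ∈ indB B₁ B₂ p q := by
  have h1 := expl_two hexp hp
  have h2 := expl_two hexp hq
  cases ha : B₁ s p <;> cases hb : B₁ s q <;>
    cases hc : B₂ s p <;> cases hd : B₂ s q <;> simp_all
  · exact ⟨s, Or.inr ⟨hc, hd⟩⟩
  · exact ⟨s, Or.inl ⟨ha, hb⟩⟩

/-- the haplotype of a (2 at q)-row aligned with value true at q has the value of
a 1-column c equal to true : (true, true) ∈ indB c q -/
lemma one_two_mem (hexp : Explains B₁ B₂ A) {s : Fin n} {c q : Fin m}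
    (hc : A s c = 1) (hq : A s q = 2) :
    ((true, true) : Bool × Bool) ∈ indB B₁ B₂ c q := by
  have h1 := (hexp s c).2.1 hc
  have h2 := expl_two hexp hq
  cases hb : B₁ s q
  · refine ⟨s, Or.inr ⟨h1.2, ?_⟩⟩; cases hd : B₂ s q <;> simp_all
  · exact ⟨s, Or.inl ⟨h1.1, hb⟩⟩

end Helpers

section Main

variable {n m : ℕ} {A : Fin n → Fin m → Fin 3} {B₁ B₂ : Fin n → Fin m → Bool}

/-- If every haplotype with value true at `q` has value true at `p`, and `p` is not
col-greater than `q`, then the columns `p` and `q` of `A` are identical. -/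
lemma colEq_of_below (hexp : Explains B₁ B₂ A) {p q : Fin m}
    (hb : ∀ s : Fin n, (B₁ s q = true → B₁ s p = true) ∧ (B₂ s q = true → B₂ s p = true))
    (hng : ¬ ColGreater A p q) : ∀ s, A s p = A s q := by
  have hsub : indA A p q ⊆ ({(false, false), (true, false), (true, true)} : Set (Bool × Bool)) := by
    rintro ⟨x, y⟩ hxy
    cases x <;> cases y <;> simp_all
    -- remaining case : (false, true) ∈ indA
    rcases hxy with ⟨s, h | h | h⟩
    · have hp := expl_bool hexp (x := false) h.1
      have hq := expl_bool hexp (x := true) h.2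
      have := (hb s).1 hq.1
      simp [hp.1] at this
    · have hp := expl_bool hexp (x := false) h.1
      have hq := expl_two hexp h.2
      cases hbq : B₁ s q
      · have h2 : B₂ s q = true := by cases hd : B₂ s q <;> simp_all
        have := (hb s).2 h2; simp [hp.2] at this
      · have := (hb s).1 hbq; simp [hp.1] at this
    · have hq := expl_bool hexp (x := true) h.2
      have hp := expl_two hexp h.1
      have t1 := (hb s).1 hq.1
      have t2 := (hb s).2 hq.2
      rw [t1, t2] at hp; exact hp rfl
  intro s
  by_contra hne
  exact hng ⟨hsub, s, hne⟩

lemma indA_congr {p q : Fin m} (hEq : ∀ s, A s p = A s q) (c : Fin m) :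
    indA A c p = indA A c q := by
  ext z
  constructor <;> rintro ⟨s, h⟩ <;> refine ⟨s, ?_⟩
  · rwa [hEq s] at h
  · rwa [← hEq s] at h

lemma colGreater_congr {p q : Fin m} (hEq : ∀ s, A s p = A s q) (c : Fin m) :
    ColGreater A c p ↔ ColGreater A c q := by
  constructor <;> rintro ⟨h1, s, h2⟩
  · exact ⟨by rwa [indA_congr hEq c] at h1, s, by rwa [hEq s] at h2⟩
  · exact ⟨by rwa [← indA_congr hEq c] at h1, s, by rwa [← hEq s] at h2⟩

/-- two different columns with identical entries cannot both have rows in their rowSets -/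
lemma rowSet_colEq_false {i j : Fin m} {r r₂ : Fin n} (hEq : ∀ s, A s i = A s j)
    (hij : i ≠ j) (hr : r ∈ rowSet A i) (hr2 : r₂ ∈ rowSet A j) : False := by
  obtain ⟨hri, hmax, hlt⟩ := hr
  obtain ⟨hr2j, hmax2, hlt2⟩ := hr2
  have hEq' : ∀ s, A s j = A s i := fun s => (hEq s).symm
  have hij1 : i < j := by
    refine hlt j (Ne.symm hij) ⟨by rw [← hEq r]; exact hri, fun c hc h2 => ?_⟩
    by_cases hci : c = i
    · subst hci
      intro hg
      rcases hg.2 with ⟨s, hs⟩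
      exact hs (hEq s)
    · exact fun hg => hmax c hci h2 ((colGreater_congr hEq c).mpr hg)
  have hij2 : j < i := by
    refine hlt2 i hij ⟨by rw [← hEq' r₂]; exact hr2j, fun c hc h2 => ?_⟩
    by_cases hcj : c = j
    · subst hcj
      intro hg
      rcases hg.2 with ⟨s, hs⟩
      exact hs (hEq' s)
    · exact fun hg => hmax2 c hcj h2 ((colGreater_congr hEq' c).mpr hg)
  exact absurd hij1 (lt_asymm hij2)

/-- key violation lemma : row `r` has `c = 1` and a 2 at `q`; row `r₂` has 2s at
`c`, `p`, `q`, resolves `p`,`q` oppositely and `c` aligned with `p`. -/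
lemma opp_viol (hexp : Explains B₁ B₂ A) (h3 : ThreeGamete B₁ B₂)
    {c p q : Fin m} {r r₂ : Fin n}
    (hrc : A r c = 1) (hrq : A r q = 2)
    (h2c : A r₂ c = 2) (h2p : A r₂ p = 2) (h2q : A r₂ q = 2)
    (hopp : B₁ r₂ p ≠ B₁ r₂ q) (hcp : B₁ r₂ c = B₁ r₂ p) : False := by
  have e11 := one_two_mem hexp hrc hrq
  have hcq : B₁ r₂ c ≠ B₁ r₂ q := by rw [hcp]; exact hopp
  have hcross := cross_mem hexp h2c h2q hcq
  exact noThree h3 c q hcross.1 hcross.2 e11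

/-- From a row in `rowSet A i` with a 2 at columns `k` and `l`, resolved with `i`
aligned with `k` and opposite to `l`, any other row with 2s at `k` and `l` also has
a 2 at `i`. -/
lemma twoAt (hexp : Explains B₁ B₂ A) (h3 : ThreeGamete B₁ B₂)
    {i k l : Fin m} {r r₂ : Fin n}
    (hik : B₁ r i = B₁ r k) (hil : B₁ r i ≠ B₁ r l)
    (hri : A r i = 2) (hrk : A r k = 2) (hrl : A r l = 2)
    (hcg : ¬ ColGreater A k i)
    (h2k : A r₂ k = 2) (h2l : A r₂ l = 2) : A r₂ i = 2 := by
  have hkl : B₁ r k ≠ B₁ r l := by rw [← hik]; exact hil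
  have ckl := cross_mem hexp hrk hrl hkl
  have no11kl : ((true, true) : Bool × Bool) ∉ indB B₁ B₂ k l :=
    fun hm => noThree h3 k l ckl.1 ckl.2 hm
  have cil := cross_mem hexp hri hrl hil
  have no11il : ((true, true) : Bool × Bool) ∉ indB B₁ B₂ i l :=
    fun hm => noThree h3 i l cil.1 cil.2 hm
  have mem11ki : ((true, true) : Bool × Bool) ∈ indB B₁ B₂ k i :=
    diag_mem hexp hrk hri (by rw [← hik])
  by_cases h10 : ((true, false) : Bool × Bool) ∈ indB B₁ B₂ k i
  · -- then (false,true) ∉ indB k i, i.e. every haplotype with i = true has k = true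
    have h01 : ((false, true) : Bool × Bool) ∉ indB B₁ B₂ k i :=
      fun hm => noThree h3 k i hm h10 mem11ki
    have hb : ∀ s : Fin n, (B₁ s i = true → B₁ s k = true) ∧ (B₂ s i = true → B₂ s k = true) := by
      intro s
      constructor <;> intro hsi
      · cases hsk : B₁ s k
        · exact absurd (⟨s, Or.inl ⟨hsk, hsi⟩⟩ : _ ∈ indB B₁ B₂ k i) h01
        · rfl
      · cases hsk : B₂ s k
        · exact absurd (⟨s, Or.inr ⟨hsk, hsi⟩⟩ : _ ∈ indB B₁ B₂ k i) h01
        · rfl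
    have hEq := colEq_of_below hexp hb hcg
    rw [← hEq r₂]; exact h2k
  · -- every haplotype with k = true has i = true; chase row r₂
    have himp1 : B₁ r₂ k = true → B₁ r₂ i = true := by
      intro ha; cases hb : B₁ r₂ i
      · exact absurd (⟨r₂, Or.inl ⟨ha, hb⟩⟩ : _ ∈ indB B₁ B₂ k i) h10
      · rfl
    have himp2 : B₂ r₂ k = true → B₂ r₂ i = true := by
      intro ha; cases hb : B₂ r₂ i
      · exact absurd (⟨r₂, Or.inr ⟨ha, hb⟩⟩ : _ ∈ indB B₁ B₂ k i) h10
      · rfl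
    have hK := expl_two hexp h2k
    have hL := expl_two hexp h2l
    apply expl_two' hexp
    cases ha : B₁ r₂ k
    · -- B₂ r₂ k = true
      have hb2 : B₂ r₂ k = true := by cases hb : B₂ r₂ k <;> simp_all
      have hi2 : B₂ r₂ i = true := himp2 hb2
      -- B₂ r₂ l = false, so B₁ r₂ l = true
      have hl2 : B₂ r₂ l = false := by
        cases hc : B₂ r₂ l
        · rfl
        · exact absurd (⟨r₂, Or.inr ⟨hb2, hc⟩⟩ : _ ∈ indB B₁ B₂ k l) no11kl
      have hl1 : B₁ r₂ l = true := by cases hc : B₁ r₂ l <;> simp_all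
      have hi1 : B₁ r₂ i = false := by
        cases hc : B₁ r₂ i
        · rfl
        · exact absurd (⟨r₂, Or.inl ⟨hc, hl1⟩⟩ : _ ∈ indB B₁ B₂ i l) no11il
      rw [hi1, hi2]; simp
    · have hi1 : B₁ r₂ i = true := himp1 ha
      have hl1 : B₁ r₂ l = false := by
        cases hc : B₁ r₂ l
        · rfl
        · exact absurd (⟨r₂, Or.inl ⟨ha, hc⟩⟩ : _ ∈ indB B₁ B₂ k l) no11kl
      have hl2 : B₂ r₂ l = true := by cases hc : B₂ r₂ l <;> simp_all
      have hi2 : B₂ r₂ i = false := by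
        cases hc : B₂ r₂ i
        · rfl
        · exact absurd (⟨r₂, Or.inr ⟨hc, hl2⟩⟩ : _ ∈ indB B₁ B₂ i l) no11il
      rw [hi1, hi2]; simp



lemma bool_resolve {x y z : Bool} (h : x ≠ y) (h2 : z ≠ x) : z = y := by
  cases x <;> cases y <;> cases z <;> simp_all

/-- Two different columns cannot both "claim" rows whose other column is also 2. -/
lemma key (hexp : Explains B₁ B₂ A) (h3 : ThreeGamete B₁ B₂)
    {i j : Fin m} {r r₂ : Fin n} (hij : i ≠ j)
    (hr : r ∈ rowSet A i) (hrj : A r j = 2)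
    (hr2 : r₂ ∈ rowSet A j) (h2i : A r₂ i = 2) : False := by
  have hri : A r i = 2 := hr.1
  have h2j : A r₂ j = 2 := hr2.1
  by_cases hs1 : B₁ r i = B₁ r j <;> by_cases hs2 : B₁ r₂ i = B₁ r₂ j
  · -- both rows resolve i, j identically
    have m11 := diag_mem hexp hri hrj hs1
    by_cases h01 : ((false, true) : Bool × Bool) ∈ indB B₁ B₂ i j
    · by_cases h10 : ((true, false) : Bool × Bool) ∈ indB B₁ B₂ i j
      · exact noThree h3 i j h01 h10 m11
      · -- no haplotype with i = true, j = false : i below j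
        have hb : ∀ s : Fin n, (B₁ s i = true → B₁ s j = true) ∧
            (B₂ s i = true → B₂ s j = true) := by
          intro s
          constructor <;> intro hsi
          · cases hsj : B₁ s j
            · exact absurd (⟨s, Or.inl ⟨hsi, hsj⟩⟩ : _ ∈ indB B₁ B₂ i j) h10
            · rfl
          · cases hsj : B₂ s j
            · exact absurd (⟨s, Or.inr ⟨hsi, hsj⟩⟩ : _ ∈ indB B₁ B₂ i j) h10
            · rfl
        have hEq := colEq_of_below hexp hb (hr.2.1 j (Ne.symm hij) hrj)
        exact rowSet_colEq_false (fun s => (hEq s).symm) hij hr hr2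
    · -- no haplotype with i = false, j = true : j below i
      have hb : ∀ s : Fin n, (B₁ s j = true → B₁ s i = true) ∧
          (B₂ s j = true → B₂ s i = true) := by
        intro s
        constructor <;> intro hsj
        · cases hsi : B₁ s i
          · exact absurd (⟨s, Or.inl ⟨hsi, hsj⟩⟩ : _ ∈ indB B₁ B₂ i j) h01
          · rfl
        · cases hsi : B₂ s i
          · exact absurd (⟨s, Or.inr ⟨hsi, hsj⟩⟩ : _ ∈ indB B₁ B₂ i j) h01
          · rfl
      have hEq := colEq_of_below hexp hb (hr2.2.1 i hij h2i)
      exact rowSet_colEq_false hEq hij hr hr2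
  · -- r same, r₂ opposite : three gametes at (i, j)
    have m11 := diag_mem hexp hri hrj hs1
    have c := cross_mem hexp h2i h2j hs2
    exact noThree h3 i j c.1 c.2 m11
  · -- r opposite, r₂ same
    have m11 := diag_mem hexp h2i h2j hs2
    have c := cross_mem hexp hri hrj hs1
    exact noThree h3 i j c.1 c.2 m11
  · -- both opposite : i and j are both maximal 2-columns, contradiction with order
    have max_i : ∀ c : Fin m, c ≠ i → A r₂ c = 2 → ¬ ColGreater A c i := by
      intro c hc h2c hcg
      by_cases hrc : A r c = 2
      · exact hr.2.1 c hc hrc hcg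
      · have h01 := no01_of_subset hcg.1
        have hc0 : A r c ≠ 0 := fun h0 =>
          h01 ⟨r, Or.inr (Or.inl ⟨by simpa [boolToFin3] using h0, hri⟩)⟩
        have hc1 : A r c = 1 := by
          rcases fin3_cases (A r c) with h | h | h
          · exact absurd h hc0
          · exact h
          · exact absurd h hrc
        by_cases hal : B₁ r₂ c = B₁ r₂ i
        · exact opp_viol hexp h3 hc1 hrj h2c h2i h2j hs2 hal
        · have hal2 : B₁ r₂ c = B₁ r₂ j := bool_resolve hs2 hal
          exact opp_viol hexp h3 hc1 hri h2c h2j h2i (fun h => hs2 h.symm) hal2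
    have max_j : ∀ c : Fin m, c ≠ j → A r c = 2 → ¬ ColGreater A c j := by
      intro c hc hrc hcg
      by_cases h2c : A r₂ c = 2
      · exact hr2.2.1 c hc h2c hcg
      · have h01 := no01_of_subset hcg.1
        have hc0 : A r₂ c ≠ 0 := fun h0 =>
          h01 ⟨r₂, Or.inr (Or.inl ⟨by simpa [boolToFin3] using h0, h2j⟩)⟩
        have hc1 : A r₂ c = 1 := by
          rcases fin3_cases (A r₂ c) with h | h | h
          · exact absurd h hc0
          · exact h
          · exact absurd h h2c
        by_cases hal : B₁ r c = B₁ r j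
        · exact opp_viol hexp h3 hc1 h2i hrc hrj hri (fun h => hs1 h.symm) hal
        · have hal2 : B₁ r c = B₁ r i := bool_resolve (fun h => hs1 h.symm) hal
          exact opp_viol hexp h3 hc1 h2j hrc hri hrj hs1 hal2
    have hlt1 : i < j := hr.2.2 j (Ne.symm hij) ⟨hrj, max_j⟩
    have hlt2 : j < i := hr2.2.2 i hij ⟨h2i, max_i⟩
    exact absurd hlt1 (lt_asymm hlt2)

/-- Let `B` be a haplotype matrix explaining `A` that satisfies the three gamete
property, let `g` (row `r` of `A`) lie in `A_i`, let `{k,l}` be an edge of the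
resolution graph `G_i` of weight `w ∈ {0,1}` with `g[k] = g[l] = 2`, and let
`h = B₁ r` be the first explaining haplotype of `g`. Then `h[i] = h[k]` holds if,
and only if, (`h[i] = h[l]` holds exactly when `w = 0`): the resolution of `g`
relative to column `i` is the same in `k` and `l` when `w = 0` and opposite
when `w = 1`. -/
theorem edge_weight_controls_relative_resolution {n m : ℕ} (A : Fin n → Fin m → Fin 3)
    (B₁ B₂ : Fin n → Fin m → Bool) (hexp : Explains B₁ B₂ A) (h3 : ThreeGamete B₁ B₂)
    (i k l : Fin m) (r : Fin n) (hr : r ∈ rowSet A i)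
    (hk : A r k = 2) (hl : A r l = 2)
    (w : ℕ) (hw : w = 0 ∨ w = 1) (he : resEdge A i k l w) :
    ((B₁ r i = B₁ r k) ↔ ((B₁ r i = B₁ r l) ↔ w = 0)) := by
  obtain ⟨hklne, -, hcase⟩ := he
  rcases hw with rfl | rfl
  · -- weight 0 : the resolutions at k and l agree
    rcases hcase with ⟨-, hc⟩ | ⟨hw1, -⟩
    swap
    · exact absurd hw1 (by omega)
    have heq : B₁ r k = B₁ r l := by
      rcases hc with h11 | ⟨j, hji, r₂, hr₂, hk₂, hl₂⟩
      · by_contra hne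
        have c := cross_mem hexp hk hl hne
        exact noThree h3 k l c.1 c.2 (indA_subset_indB hexp k l h11)
      · by_contra hne
        have hri : A r i = 2 := hr.1
        have notCGi : ∀ c, A r c = 2 → ¬ ColGreater A c i := fun c h2 => by
          by_cases hc' : c = i
          · subst hc'; exact colGreater_irrefl A c
          · exact hr.2.1 c hc' h2
        have notCGj : ∀ c, A r₂ c = 2 → ¬ ColGreater A c j := fun c h2 => by
          by_cases hc' : c = j
          · subst hc'; exact colGreater_irrefl A c
          · exact hr₂.2.1 c hc' h2
        have h2i : A r₂ i = 2 := by
          by_cases hik : B₁ r i = B₁ r k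
          · exact twoAt hexp h3 hik (fun h => hne (hik.symm.trans h)) hri hk hl
              (notCGi k hk) hk₂ hl₂
          · have hil : B₁ r i = B₁ r l := bool_resolve hne hik
            exact twoAt hexp h3 hil hik hri hl hk (notCGi l hl) hl₂ hk₂
        have c := cross_mem hexp hk hl hne
        have no11 : ((true, true) : Bool × Bool) ∉ indB B₁ B₂ k l :=
          fun hm => noThree h3 k l c.1 c.2 hm
        have hne2 : B₁ r₂ k ≠ B₁ r₂ l := fun hE => no11 (diag_mem hexp hk₂ hl₂ hE)
        have hrj : A r j = 2 := by
          by_cases hjk : B₁ r₂ j = B₁ r₂ k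
          · exact twoAt hexp h3 hjk (fun h => hne2 (hjk.symm.trans h)) hr₂.1 hk₂ hl₂
              (notCGj k hk₂) hk hl
          · have hjl : B₁ r₂ j = B₁ r₂ l := bool_resolve hne2 hjk
            exact twoAt hexp h3 hjl hjk hr₂.1 hl₂ hk₂ (notCGj l hl₂) hl hk
        exact key hexp h3 (Ne.symm hji) hr hrj hr₂ h2i
    rw [heq]; simp
  · -- weight 1 : the resolutions at k and l are opposite
    rcases hcase with ⟨hw0, -⟩ | ⟨-, hsub⟩
    · exact absurd hw0 (by omega)
    have h01 := indA_subset_indB hexp k l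
      (hsub (show ((false, true) : Bool × Bool) ∈ _ by simp))
    have h10 := indA_subset_indB hexp k l
      (hsub (show ((true, false) : Bool × Bool) ∈ _ by simp))
    have hne : B₁ r k ≠ B₁ r l := fun hE =>
      noThree h3 k l h01 h10 (diag_mem hexp hk hl hE)
    cases h1 : B₁ r i <;> cases h2 : B₁ r k <;> cases h3' : B₁ r l <;> simp_all
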